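/- arXiv:math/0511456 — 6 statements merged into one kernel-verified Lean document; each statement's English description precedes it below -/
import Mathlib

section
/- The Arens-Eells seminorm of a molecule m satisfies ||m|| = sup { Σ_{x∈X} f(x) m(x) : f ∈ Lip_0(X), f is 1-Lipschitz }, where the basepoint e is any fixed point of X. -/
/-- A molecule: finitely supported real function summing to zero. -/
def IsMolecule {X : Type*} (m : X →₀ ℝ) : Prop := m.sum (fun _ v => v) = 0

/-- The elementary molecule `m_{pq} = χ_{p} - χ_{q}`. -/
noncomputable def mol {X : Type*} (p q : X) : X →₀ ℝ :=
  Finsupp.single p 1 - Finsupp.single q 1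

/-- The Arens-Eells seminorm. -/
noncomputable def aeNorm {X : Type*} [MetricSpace X] (m : X →₀ ℝ) : ℝ :=
  sInf { c | ∃ (n : ℕ) (a : Fin n → ℝ) (p q : Fin n → X),
    m = ∑ i, a i • mol (p i) (q i) ∧ c = ∑ i, |a i| * dist (p i) (q i) }

namespace AEAux

variable {X : Type*} [MetricSpace X]

def costSet (m : X →₀ ℝ) : Set ℝ :=
  { c | ∃ (n : ℕ) (a : Fin n → ℝ) (p q : Fin n → X),
    m = ∑ i, a i • mol (p i) (q i) ∧ c = ∑ i, |a i| * dist (p i) (q i) }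

lemma aeNorm_eq (m : X →₀ ℝ) : aeNorm m = sInf (costSet m) := rfl

lemma costSet_nonneg {m : X →₀ ℝ} {c : ℝ} (hc : c ∈ costSet m) : 0 ≤ c := by
  obtain ⟨n, a, p, q, -, rfl⟩ := hc
  exact Finset.sum_nonneg fun i _ => mul_nonneg (abs_nonneg _) dist_nonneg

lemma sum_smul_mol (e : X) (m : X →₀ ℝ) (hm : IsMolecule m) :
    ∑ x ∈ m.support, m x • mol x e = m := by
  simp only [mol, smul_sub, Finsupp.smul_single, smul_eq_mul, mul_one]
  rw [Finset.sum_sub_distrib]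
  have h1 : ∑ x ∈ m.support, Finsupp.single x (m x) = m := Finsupp.sum_single m
  have h2 : ∑ x ∈ m.support, Finsupp.single e (m x)
      = Finsupp.single e (∑ x ∈ m.support, m x) :=
    (map_sum (Finsupp.singleAddHom e) _ _).symm
  have h3 : (∑ x ∈ m.support, m x) = 0 := hm
  rw [h1, h2, h3, Finsupp.single_zero, sub_zero]

lemma costSet_nonempty (e : X) {m : X →₀ ℝ} (hm : IsMolecule m) : (costSet m).Nonempty := by
  classical
  have h : m = ∑ i : Fin m.support.card,
      m ((m.support.equivFin.symm i : X)) • mol ((m.support.equivFin.symm i : X)) e := by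
    refine Eq.symm ?_
    calc ∑ i : Fin m.support.card,
          m ((m.support.equivFin.symm i : X)) • mol ((m.support.equivFin.symm i : X)) e
        = ∑ x : m.support, m (x : X) • mol (x : X) e :=
          Equiv.sum_comp m.support.equivFin.symm
            (fun x : m.support => m (x : X) • mol (x : X) e)
      _ = ∑ x ∈ m.support, m x • mol x e :=
          Finset.sum_coe_sort m.support (fun x => m x • mol x e)
      _ = m := sum_smul_mol e m hm
  exact ⟨_, m.support.card, fun i => m (m.support.equivFin.symm i),
    fun i => (m.support.equivFin.symm i : X), fun _ => e, h, rfl⟩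


lemma pairing_le {f : X → ℝ} (hf : LipschitzWith 1 f) {m : X →₀ ℝ} {c : ℝ}
    (hc : c ∈ costSet m) : m.sum (fun x v => f x * v) ≤ c := by
  obtain ⟨n, a, p, q, rfl, rfl⟩ := hc
  have hlc : ((∑ i, a i • mol (p i) (q i)).sum fun x v => f x * v)
      = Finsupp.linearCombination ℝ f (∑ i, a i • mol (p i) (q i)) := by
    rw [Finsupp.linearCombination_apply]
    exact Finsupp.sum_congr fun x _ => mul_comm _ _
  rw [hlc, map_sum]
  refine Finset.sum_le_sum fun i _ => ?_
  have hmol : Finsupp.linearCombination ℝ f (mol (p i) (q i)) = f (p i) - f (q i) := by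
    simp [mol]
  rw [map_smul, hmol, smul_eq_mul]
  have hd : |f (p i) - f (q i)| ≤ dist (p i) (q i) := by
    have := hf.dist_le_mul (p i) (q i)
    rw [Real.dist_eq] at this
    simpa using this
  calc a i * (f (p i) - f (q i)) ≤ |a i * (f (p i) - f (q i))| := le_abs_self _
    _ = |a i| * |f (p i) - f (q i)| := abs_mul _ _
    _ ≤ |a i| * dist (p i) (q i) := mul_le_mul_of_nonneg_left hd (abs_nonneg _)

lemma costSet_add {x y : X →₀ ℝ} {c₁ c₂ : ℝ} (h1 : c₁ ∈ costSet x) (h2 : c₂ ∈ costSet y) :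
    c₁ + c₂ ∈ costSet (x + y) := by
  obtain ⟨n1, a1, p1, q1, rfl, rfl⟩ := h1
  obtain ⟨n2, a2, p2, q2, rfl, rfl⟩ := h2
  exact ⟨n1 + n2, Fin.append a1 a2, Fin.append p1 p2, Fin.append q1 q2,
    by simp [Fin.sum_univ_add, Fin.append_left, Fin.append_right],
    by simp [Fin.sum_univ_add, Fin.append_left, Fin.append_right]⟩

lemma costSet_smul {x : X →₀ ℝ} {c : ℝ} (h : c ∈ costSet x) (r : ℝ) :
    |r| * c ∈ costSet (r • x) := by
  obtain ⟨n, a, p, q, rfl, rfl⟩ := h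
  exact ⟨n, fun i => r * a i, p, q,
    by rw [Finset.smul_sum]; simp [smul_smul],
    by rw [Finset.mul_sum]; simp [abs_mul, mul_assoc]⟩

lemma aeNorm_nonneg (m : X →₀ ℝ) : 0 ≤ aeNorm m :=
  Real.sInf_nonneg fun _ hc => costSet_nonneg hc

lemma aeNorm_le_of_mem {m : X →₀ ℝ} {c : ℝ} (hc : c ∈ costSet m) : aeNorm m ≤ c :=
  csInf_le ⟨0, fun _ h => costSet_nonneg h⟩ hc

lemma aeNorm_zero : aeNorm (0 : X →₀ ℝ) = 0 :=
  le_antisymm (aeNorm_le_of_mem ⟨0, Fin.elim0, Fin.elim0, Fin.elim0, by simp, by simp⟩)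
    (aeNorm_nonneg 0)

lemma aeNorm_add_le (e : X) {x y : X →₀ ℝ} (hx : IsMolecule x) (hy : IsMolecule y) :
    aeNorm (x + y) ≤ aeNorm x + aeNorm y := by
  have hnex := costSet_nonempty e hx
  have hney := costSet_nonempty e hy
  have key : ∀ c₁ ∈ costSet x, ∀ c₂ ∈ costSet y, aeNorm (x + y) ≤ c₁ + c₂ :=
    fun c₁ h1 c₂ h2 => aeNorm_le_of_mem (costSet_add h1 h2)
  have h2 : ∀ c₁ ∈ costSet x, aeNorm (x + y) - c₁ ≤ sInf (costSet y) := fun c₁ h1 =>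
    le_csInf hney fun c₂ hc2 => by linarith [key c₁ h1 c₂ hc2]
  have h3 : aeNorm (x + y) - sInf (costSet y) ≤ sInf (costSet x) :=
    le_csInf hnex fun c₁ h1 => by linarith [h2 c₁ h1]
  rw [aeNorm_eq x, aeNorm_eq y]
  linarith

lemma aeNorm_smul_le (e : X) {x : X →₀ ℝ} (hx : IsMolecule x) (r : ℝ) :
    aeNorm (r • x) ≤ |r| * aeNorm x := by
  have hne := costSet_nonempty e hx
  rcases eq_or_ne r 0 with rfl | hr
  · simp [aeNorm_zero, aeNorm_nonneg]
  · have habs : 0 < |r| := abs_pos.2 hr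
    have h1 : ∀ c ∈ costSet x, aeNorm (r • x) / |r| ≤ c := fun c hc =>
      (div_le_iff₀ habs).2 (by
        have := aeNorm_le_of_mem (costSet_smul hc r); linarith [this])
    have := le_csInf hne h1
    rw [← aeNorm_eq] at this
    calc aeNorm (r • x) = |r| * (aeNorm (r • x) / |r|) := by field_simp
      _ ≤ |r| * aeNorm x := mul_le_mul_of_nonneg_left this habs.le

noncomputable def sumL : (X →₀ ℝ) →ₗ[ℝ] ℝ := Finsupp.lsum ℝ fun _ => LinearMap.id

lemma isMolecule_iff {m : X →₀ ℝ} : IsMolecule m ↔ sumL m = 0 := Iff.rfl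

lemma isMolecule_smul {m : X →₀ ℝ} (hm : IsMolecule m) (r : ℝ) : IsMolecule (r • m) := by
  rw [isMolecule_iff, map_smul, isMolecule_iff.1 hm, smul_zero]

lemma aeNorm_abs_smul (e : X) {x : X →₀ ℝ} (hx : IsMolecule x) (r : ℝ) :
    aeNorm (r • x) = |r| * aeNorm x := by
  rcases eq_or_ne r 0 with rfl | hr
  · simp [aeNorm_zero]
  · refine le_antisymm (aeNorm_smul_le e hx r) ?_
    have h := aeNorm_smul_le e (isMolecule_smul hx r) r⁻¹
    rw [smul_smul, inv_mul_cancel₀ hr, one_smul, abs_inv] at h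
    have habs : 0 < |r| := abs_pos.2 hr
    calc |r| * aeNorm x ≤ |r| * (|r|⁻¹ * aeNorm (r • x)) :=
          mul_le_mul_of_nonneg_left h habs.le
      _ = aeNorm (r • x) := by field_simp

lemma aeNorm_smul_pos (e : X) {x : X →₀ ℝ} (hx : IsMolecule x) {c : ℝ} (hc : 0 < c) :
    aeNorm (c • x) = c * aeNorm x := by
  rw [aeNorm_abs_smul e hx c, abs_of_pos hc]

end AEAux

open AEAux in
set_option maxHeartbeats 1000000 in
/-- The Arens-Eells seminorm of a molecule `m` satisfies
`‖m‖ = sup { Σ_x f(x) m(x) : f ∈ Lip₀(X), f 1-Lipschitz }`, the basepoint `e` being any fixed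
point of `X`. -/
theorem aeNorm_eq_sup_pairing {X : Type*} [MetricSpace X] (e : X) (m : X →₀ ℝ)
    (hm : IsMolecule m) :
    aeNorm m = sSup { s : ℝ | ∃ f : X → ℝ, LipschitzWith 1 f ∧ f e = 0 ∧
      s = m.sum (fun x v => f x * v) } := by
  classical
  set S : Set ℝ := { s : ℝ | ∃ f : X → ℝ, LipschitzWith 1 f ∧ f e = 0 ∧
      s = m.sum (fun x v => f x * v) } with hSdef
  have h0S : (0:ℝ) ∈ S := by
    refine ⟨fun _ => 0, ?_, rfl, ?_⟩
    · intro x y; simp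
    · simp [Finsupp.sum]
  have hub : ∀ s ∈ S, s ≤ aeNorm m := by
    rintro s ⟨f, hf, -, rfl⟩
    exact le_csInf (costSet_nonempty e hm) fun c hc => pairing_le hf hc
  have key : aeNorm m ∈ S := by
    by_cases hm0 : m = 0
    · subst hm0; rw [aeNorm_zero]; exact h0S
    · set M := LinearMap.ker (sumL (X := X)) with hMdef
      have hmM : m ∈ M := isMolecule_iff.1 hm
      set m' : M := ⟨m, hmM⟩ with hm'def
      have hm'0 : m' ≠ 0 := fun h => hm0 (congrArg Subtype.val h)
      have hmolv : ∀ v : M, IsMolecule (v : X →₀ ℝ) := fun v => isMolecule_iff.2 v.2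
      set N : M → ℝ := fun v => aeNorm (v : X →₀ ℝ) with hNdef
      have N_hom : ∀ c : ℝ, 0 < c → ∀ v : M, N (c • v) = c * N v := fun c hc v =>
        aeNorm_smul_pos e (hmolv v) hc
      have N_add : ∀ v w : M, N (v + w) ≤ N v + N w := fun v w =>
        aeNorm_add_le e (hmolv v) (hmolv w)
      have hf0 : ∀ x : (LinearPMap.mkSpanSingleton (K := ℝ) m' (aeNorm m) hm'0 : M →ₗ.[ℝ] ℝ).domain,
          (LinearPMap.mkSpanSingleton (K := ℝ) m' (aeNorm m) hm'0 : M →ₗ.[ℝ] ℝ) x ≤ N x := by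
        rintro ⟨x, hx⟩
        obtain ⟨c, rfl⟩ := Submodule.mem_span_singleton.1 hx
        rw [LinearPMap.mkSpanSingleton'_apply]
        have hNval : N (c • m') = |c| * aeNorm m := aeNorm_abs_smul e hm c
        show c • aeNorm m ≤ N (c • m')
        rw [hNval, smul_eq_mul]
        exact mul_le_mul_of_nonneg_right (le_abs_self c) (aeNorm_nonneg m)
      obtain ⟨g, hg_ext, hg_le⟩ :=
        exists_extension_of_le_sublinear
          (LinearPMap.mkSpanSingleton (K := ℝ) m' (aeNorm m) hm'0 : M →ₗ.[ℝ] ℝ) N N_hom N_add hf0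
      have hmolM : ∀ x y : X, mol x y ∈ M := by
        intro x y
        show sumL (mol x y) = 0
        rw [mol, map_sub]
        simp [sumL]
      set F : X → ℝ := fun x => g ⟨mol x e, hmolM x e⟩ with hFdef
      have hmolzero : (⟨mol e e, hmolM e e⟩ : M) = 0 := Subtype.ext (by simp [mol])
      have hFe : F e = 0 := by
        show g ⟨mol e e, hmolM e e⟩ = 0
        rw [hmolzero, map_zero]
      have hbound : ∀ x y : X, g ⟨mol x y, hmolM x y⟩ ≤ dist x y := by
        intro x y
        refine (hg_le _).trans ?_
        show aeNorm (mol x y) ≤ dist x y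
        exact aeNorm_le_of_mem (m := mol x y) (c := dist x y)
          ⟨1, fun _ => (1:ℝ), fun _ => x, fun _ => y, by simp, by simp⟩
      have hsub : ∀ x y : X, (⟨mol x e, hmolM x e⟩ : M) - ⟨mol y e, hmolM y e⟩
          = ⟨mol x y, hmolM x y⟩ := fun x y => Subtype.ext (by
        show mol x e - mol y e = mol x y
        simp only [mol]
        abel)
      have hFlip : LipschitzWith 1 F := by
        refine LipschitzWith.of_dist_le_mul fun x y => ?_
        rw [NNReal.coe_one, one_mul, Real.dist_eq]
        have h1 : F x - F y = g ⟨mol x y, hmolM x y⟩ := by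
          rw [← hsub x y]; exact (map_sub g _ _).symm
        have h2 : F y - F x = g ⟨mol y x, hmolM y x⟩ := by
          rw [← hsub y x]; exact (map_sub g _ _).symm
        rw [abs_sub_le_iff]
        exact ⟨h1 ▸ hbound x y, h2 ▸ (hbound y x).trans (dist_comm y x).le⟩
      have hgm : g m' = aeNorm m := by
        have h := hg_ext ⟨m', Submodule.mem_span_singleton_self m'⟩
        rwa [LinearPMap.mkSpanSingleton_apply] at h
      have hdecompM : ∑ x ∈ m.support, m x • (⟨mol x e, hmolM x e⟩ : M) = m' := by
        apply Subtype.ext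
        push_cast
        exact sum_smul_mol e m hm
      have hpair : m.sum (fun x v => F x * v) = aeNorm m := by
        rw [← hgm, ← hdecompM, map_sum, Finsupp.sum]
        refine Finset.sum_congr rfl fun x hx => ?_
        rw [map_smul, smul_eq_mul, mul_comm]
      exact ⟨F, hFlip, hFe, hpair.symm⟩
  exact le_antisymm (le_csSup ⟨aeNorm m, hub⟩ key) (Real.sSup_le hub (aeNorm_nonneg m))
end

section
/- The Arens-Eells seminorm of a nonzero molecule is strictly positive; hence ||·|| is a norm on the space of molecules. -/
/-- The Arens-Eells seminorm of a nonzero molecule is strictly positive; hence it is a norm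
on the space of molecules. -/
theorem aeNorm_pos_of_ne_zero {X : Type*} [MetricSpace X] (m : X →₀ ℝ)
    (hm : IsMolecule m) (hne : m ≠ 0) : 0 < aeNorm m := by
  classical
  obtain ⟨x₀, hx₀⟩ : ∃ x, m x ≠ 0 := by
    by_contra h; push_neg at h; exact hne (Finsupp.ext h)
  have hx₀S : x₀ ∈ m.support := Finsupp.mem_support_iff.2 hx₀
  -- the rest of the support is nonempty
  have hT : (m.support.erase x₀).Nonempty := by
    by_contra h
    rw [Finset.not_nonempty_iff_eq_empty] at h
    have hsupp : m.support = {x₀} := by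
      refine Finset.eq_singleton_iff_unique_mem.2 ⟨hx₀S, ?_⟩
      intro y hy
      by_contra hyx
      exact Finset.notMem_empty y (h ▸ Finset.mem_erase.2 ⟨hyx, hy⟩)
    have h0 := hm
    unfold IsMolecule at h0
    rw [Finsupp.sum, hsupp, Finset.sum_singleton] at h0
    exact hx₀ h0
  set T := m.support.erase x₀ with hTdef
  set r := T.inf' hT (fun x => dist x x₀) with hrdef
  have hr : 0 < r := by
    rw [hrdef, Finset.lt_inf'_iff]
    intro x hx
    exact dist_pos.2 (Finset.mem_erase.1 hx).1
  set f : X → ℝ := fun x => max (r - dist x x₀) 0 with hfdef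
  have hf_lip : ∀ x y : X, |f x - f y| ≤ dist x y := by
    intro x y
    calc |f x - f y| ≤ |(r - dist x x₀) - (r - dist y x₀)| :=
          abs_max_sub_max_le_abs _ _ _
      _ = |dist y x₀ - dist x x₀| := by ring_nf
      _ ≤ dist y x := abs_dist_sub_le _ _ _
      _ = dist x y := dist_comm _ _
  have hfx₀ : f x₀ = r := by simp [hfdef, le_of_lt hr]
  have hfT : ∀ x ∈ m.support, x ≠ x₀ → f x = 0 := by
    intro x hx hxne
    have hxT : x ∈ T := Finset.mem_erase.2 ⟨hxne, hx⟩
    have : r ≤ dist x x₀ := Finset.inf'_le _ hxT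
    simp [hfdef, sub_nonpos.2 this]
  set L : (X →₀ ℝ) →ₗ[ℝ] ℝ := Finsupp.linearCombination ℝ f with hLdef
  have hLmol : ∀ p q : X, L (mol p q) = f p - f q := by
    intro p q
    simp [hLdef, mol, map_sub, Finsupp.linearCombination_single]
  have hLm : L m = m x₀ * r := by
    rw [hLdef, Finsupp.linearCombination_apply, Finsupp.sum]
    rw [Finset.sum_eq_single_of_mem x₀ hx₀S]
    · rw [hfx₀, smul_eq_mul]
    · intro x hx hxne
      rw [hfT x hx hxne]; simp
  -- lower bound for every element of the defining set
  have hbound : ∀ c ∈ { c | ∃ (n : ℕ) (a : Fin n → ℝ) (p q : Fin n → X),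
      m = ∑ i, a i • mol (p i) (q i) ∧ c = ∑ i, |a i| * dist (p i) (q i) },
      |m x₀| * r ≤ c := by
    rintro c ⟨n, a, p, q, hrep, rfl⟩
    have h1 : L m = ∑ i, a i * (f (p i) - f (q i)) := by
      rw [hrep, map_sum]
      congr 1; ext i
      rw [map_smul, hLmol]; simp
    calc |m x₀| * r = |L m| := by
          rw [hLm, abs_mul, abs_of_pos hr]
      _ = |∑ i, a i * (f (p i) - f (q i))| := by rw [h1]
      _ ≤ ∑ i, |a i * (f (p i) - f (q i))| := Finset.abs_sum_le_sum_abs _ _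
      _ ≤ ∑ i, |a i| * dist (p i) (q i) := by
          refine Finset.sum_le_sum fun i _ => ?_
          rw [abs_mul]
          exact mul_le_mul_of_nonneg_left (hf_lip _ _) (abs_nonneg _)
  -- the defining set is nonempty
  have hne' : { c | ∃ (n : ℕ) (a : Fin n → ℝ) (p q : Fin n → X),
      m = ∑ i, a i • mol (p i) (q i) ∧ c = ∑ i, |a i| * dist (p i) (q i) }.Nonempty := by
    set e := m.support.equivFin with hedef
    refine ⟨_, m.support.card, fun i => m (e.symm i), fun i => (e.symm i : X),
      fun _ => x₀, ?_, rfl⟩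
    have h1 : ∑ i, m ((e.symm i : X)) • mol ((e.symm i : X)) x₀
        = ∑ x ∈ m.support, m x • mol x x₀ := by
      rw [← Finset.sum_coe_sort m.support (fun x => m (x : X) • mol (x : X) x₀)]
      exact Equiv.sum_comp e.symm (fun x => m (x : X) • mol (x : X) x₀)
    rw [h1]
    have h2 : ∑ x ∈ m.support, m x • mol x x₀
        = (∑ x ∈ m.support, Finsupp.single x (m x))
          - (∑ x ∈ m.support, m x) • Finsupp.single x₀ 1 := by
      rw [Finset.sum_smul]
      rw [← Finset.sum_sub_distrib]
      congr 1; ext x y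
      simp [mol, smul_sub, Finsupp.smul_single]
    have h3 : ∑ x ∈ m.support, m x = 0 := hm
    rw [h2, h3, zero_smul, sub_zero]
    exact (Finsupp.sum_single m).symm
  have := le_csInf hne' hbound
  exact lt_of_lt_of_le (mul_pos (abs_pos.2 hx₀) hr) this
end

section
/- The map x ↦ m_{xe} is an isometric embedding of the pointed metric space (X, d, e) into the Lipschitz-free space F(X), and the closed linear span of its image equals F(X). -/
lemma lincomb_mol {X : Type*} (f : X → ℝ) (p q : X) :
    Finsupp.linearCombination ℝ f (mol p q) = f p - f q := by
  simp [mol]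

lemma aeNorm_mol {X : Type*} [MetricSpace X] (x y : X) :
    aeNorm (mol x y) = dist x y := by
  unfold aeNorm
  apply le_antisymm
  · apply csInf_le
    · refine ⟨0, ?_⟩
      rintro c ⟨n, a, p, q, -, rfl⟩
      positivity
    · exact ⟨1, fun _ => 1, fun _ => x, fun _ => y, by simp, by simp⟩
  · apply le_csInf
    · exact ⟨dist x y, 1, fun _ => 1, fun _ => x, fun _ => y, by simp, by simp⟩
    · rintro c ⟨n, a, p, q, hm, rfl⟩
      set f : X → ℝ := fun z => dist z y with hf
      have h1 : Finsupp.linearCombination ℝ f (mol x y) = dist x y := by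
        rw [lincomb_mol]; simp [hf]
      have h2 : Finsupp.linearCombination ℝ f (mol x y)
          = ∑ i, a i * (f (p i) - f (q i)) := by
        rw [hm, map_sum]
        refine Finset.sum_congr rfl fun i _ => ?_
        rw [map_smul, lincomb_mol, smul_eq_mul]
      rw [← h1, h2]
      refine Finset.sum_le_sum fun i _ => ?_
      calc a i * (f (p i) - f (q i)) ≤ |a i * (f (p i) - f (q i))| := le_abs_self _
        _ = |a i| * |f (p i) - f (q i)| := abs_mul _ _
        _ ≤ |a i| * dist (p i) (q i) :=
            mul_le_mul_of_nonneg_left (abs_dist_sub_le _ _ _) (abs_nonneg _)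

/-- The map `x ↦ m_{xe}` is an isometric embedding of the pointed metric space `(X, d, e)`
into the Lipschitz-free space `F(X)` (the completion of the molecules under the Arens-Eells
norm), and the closed linear span of its image equals `F(X)`: at the dense level this says
that `aeNorm (m_{xe} - m_{ye}) = d(x,y)` for all `x, y`, and that the linear span of the
`m_{xe}` is the whole space of molecules (the kernel of the coefficient-sum functional),
whose completion is `F(X)`. -/
theorem molEmbedding_isometry_and_span {X : Type*} [MetricSpace X] (e : X) :
    (∀ x y : X, aeNorm (mol x e - mol y e) = dist x y) ∧
    Submodule.span ℝ (Set.range fun x : X => mol x e) =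
      LinearMap.ker (Finsupp.linearCombination ℝ (fun _ : X => (1 : ℝ))) := by
  constructor
  · intro x y
    have h : mol x e - mol y e = mol x y := by
      unfold mol; abel
    rw [h, aeNorm_mol]
  · apply le_antisymm
    · rw [Submodule.span_le]
      rintro _ ⟨x, rfl⟩
      simp only [SetLike.mem_coe, LinearMap.mem_ker]
      rw [lincomb_mol]
      ring
    · intro m hm
      rw [LinearMap.mem_ker, Finsupp.linearCombination_apply] at hm
      have hsum : ∑ s ∈ m.support, m s = 0 := by
        simpa [Finsupp.sum] using hm
      have hrep : m = ∑ s ∈ m.support, m s • mol s e := by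
        have : ∑ s ∈ m.support, m s • mol s e
            = (∑ s ∈ m.support, m s • Finsupp.single s (1:ℝ))
              - (∑ s ∈ m.support, m s) • Finsupp.single e (1:ℝ) := by
          rw [Finset.sum_smul, ← Finset.sum_sub_distrib]
          refine Finset.sum_congr rfl fun s _ => ?_
          rw [mol, smul_sub]
        rw [this, hsum, zero_smul, sub_zero]
        conv_lhs => rw [← Finsupp.sum_single m]
        rw [Finsupp.sum]
        refine Finset.sum_congr rfl fun s _ => ?_
        rw [Finsupp.smul_single, smul_eq_mul, mul_one]
      rw [hrep]
      exact Submodule.sum_mem _ fun s _ =>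
        Submodule.smul_mem _ _ (Submodule.subset_span ⟨s, rfl⟩)
end

section
/- The Arens-Eells norm of a molecule m depends only on distances within a set containing its support: for any e ∈ X and any finite S ⊇ supp(m), ||m|| = sup { Σ_{x} f(x) m(x) : f ∈ Lip_0(S ∪ {e}, d, e), f is 1-Lipschitz }. -/
namespace AEProof

open Pointwise

/-- The pairing of a function with a finitely supported measure-like object. -/
noncomputable def pair {X : Type*} (g : X → ℝ) : (X →₀ ℝ) →ₗ[ℝ] ℝ :=
  Finsupp.linearCombination ℝ g

lemma pair_mol {X : Type*} (g : X → ℝ) (p q : X) : pair g (mol p q) = g p - g q := by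
  simp [pair, mol, map_sub, Finsupp.linearCombination_single]

lemma pair_eq_sum {X : Type*} (g : X → ℝ) (m : X →₀ ℝ) :
    pair g m = m.sum (fun x v => g x * v) := by
  rw [pair, Finsupp.linearCombination_apply]
  exact Finsupp.sum_congr fun x _ => by rw [smul_eq_mul, mul_comm]

variable {X : Type*} [MetricSpace X]

/-- The set of costs of representations of `m`. -/
def repSet (m : X →₀ ℝ) : Set ℝ :=
  { c | ∃ (n : ℕ) (a : Fin n → ℝ) (p q : Fin n → X),
    m = ∑ i, a i • mol (p i) (q i) ∧ c = ∑ i, |a i| * dist (p i) (q i) }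

lemma aeNorm_def (m : X →₀ ℝ) : aeNorm m = sInf (repSet m) := rfl

lemma repSet_nonneg {m : X →₀ ℝ} {c : ℝ} (hc : c ∈ repSet m) : 0 ≤ c := by
  obtain ⟨n, a, p, q, -, rfl⟩ := hc
  exact Finset.sum_nonneg fun i _ => mul_nonneg (abs_nonneg _) dist_nonneg

lemma bddBelow_repSet (m : X →₀ ℝ) : BddBelow (repSet m) :=
  ⟨0, fun _ hc => repSet_nonneg hc⟩

lemma aeNorm_nonneg (m : X →₀ ℝ) : 0 ≤ aeNorm m :=
  Real.sInf_nonneg fun _ hc => repSet_nonneg hc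

lemma sum_mem_repSet {ι : Type*} [Fintype ι] (a : ι → ℝ) (p q : ι → X) :
    (∑ i, |a i| * dist (p i) (q i)) ∈ repSet (∑ i, a i • mol (p i) (q i)) := by
  classical
  let E : ι ≃ Fin (Fintype.card ι) := Fintype.equivFin ι
  refine ⟨Fintype.card ι, a ∘ E.symm, p ∘ E.symm, q ∘ E.symm, ?_, ?_⟩
  · exact (Equiv.sum_comp E.symm (fun i => a i • mol (p i) (q i))).symm
  · exact (Equiv.sum_comp E.symm (fun i => |a i| * dist (p i) (q i))).symm

lemma molecule_rep (e : X) {m : X →₀ ℝ} (hm : IsMolecule m) :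
    m = ∑ x ∈ m.support, m x • mol x e := by
  have h1 : ∑ x ∈ m.support, m x • (Finsupp.single x (1 : ℝ)) = m := by
    conv_rhs => rw [← Finsupp.sum_single m]
    exact Finset.sum_congr rfl fun x _ => by rw [Finsupp.smul_single', mul_one]
  have h2 : ∑ x ∈ m.support, m x = 0 := hm
  simp only [mol, smul_sub]
  rw [Finset.sum_sub_distrib, h1, ← Finset.sum_smul, h2, zero_smul, sub_zero]

lemma repSet_nonempty {m : X →₀ ℝ} (hm : IsMolecule m) : (repSet m).Nonempty := by
  classical
  rcases eq_or_ne m 0 with rfl | hne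
  · exact ⟨0, 0, Fin.elim0, Fin.elim0, Fin.elim0, by simp, by simp⟩
  · obtain ⟨e, -⟩ := Finsupp.support_nonempty_iff.mpr hne
    refine ⟨∑ x : m.support, |m x| * dist (x : X) e, ?_⟩
    have h := sum_mem_repSet (ι := ↥m.support) (fun x => m (x : X)) (fun x => (x : X))
      (fun _ => e)
    have h2 : (∑ x : m.support, m (x : X) • mol (x : X) e) = m := by
      rw [Finset.sum_coe_sort m.support (fun x => m x • mol x e)]
      exact (molecule_rep e hm).symm
    rwa [h2] at h

lemma aeNorm_mol_le (p q : X) : aeNorm (mol p q) ≤ dist p q := by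
  refine csInf_le (bddBelow_repSet _) ?_
  exact ⟨1, fun _ => 1, fun _ => p, fun _ => q, by simp, by simp⟩

lemma smul_mem_repSet {m : X →₀ ℝ} {c : ℝ} (hc : c ∈ repSet m) (t : ℝ) :
    |t| * c ∈ repSet (t • m) := by
  obtain ⟨n, a, p, q, hrep, rfl⟩ := hc
  refine ⟨n, fun i => t * a i, p, q, ?_, ?_⟩
  · rw [hrep, Finset.smul_sum]
    exact Finset.sum_congr rfl fun i _ => by rw [smul_smul]
  · rw [Finset.mul_sum]
    exact Finset.sum_congr rfl fun i _ => by rw [abs_mul, mul_assoc]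

lemma repSet_smul {t : ℝ} (ht : 0 < t) (m : X →₀ ℝ) :
    repSet (t • m) = t • repSet m := by
  ext c
  constructor
  · intro hc
    have h := smul_mem_repSet hc t⁻¹
    rw [smul_smul, inv_mul_cancel₀ ht.ne', one_smul] at h
    refine ⟨|t⁻¹| * c, h, ?_⟩
    show t • (|t⁻¹| * c) = c
    rw [smul_eq_mul, abs_of_pos (inv_pos.mpr ht), ← mul_assoc, mul_inv_cancel₀ ht.ne', one_mul]
  · rintro ⟨c', hc', rfl⟩
    have h := smul_mem_repSet hc' t
    rwa [abs_of_pos ht] at h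

lemma aeNorm_smul {t : ℝ} (ht : 0 < t) (m : X →₀ ℝ) :
    aeNorm (t • m) = t * aeNorm m := by
  rw [aeNorm_def, aeNorm_def, repSet_smul ht, Real.sInf_smul_of_nonneg ht.le, smul_eq_mul]

lemma add_mem_repSet {m₁ m₂ : X →₀ ℝ} {c₁ c₂ : ℝ} (h₁ : c₁ ∈ repSet m₁)
    (h₂ : c₂ ∈ repSet m₂) : c₁ + c₂ ∈ repSet (m₁ + m₂) := by
  obtain ⟨n₁, a₁, p₁, q₁, hm₁, hc₁⟩ := h₁
  obtain ⟨n₂, a₂, p₂, q₂, hm₂, hc₂⟩ := h₂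
  have h := sum_mem_repSet (ι := Fin n₁ ⊕ Fin n₂) (Sum.elim a₁ a₂) (Sum.elim p₁ p₂)
    (Sum.elim q₁ q₂)
  rw [Fintype.sum_sum_type, Fintype.sum_sum_type] at h
  simp only [Sum.elim_inl, Sum.elim_inr] at h
  rw [← hm₁, ← hm₂, ← hc₁, ← hc₂] at h
  exact h

lemma aeNorm_add_le {m₁ m₂ : X →₀ ℝ} (h₁ : IsMolecule m₁) (h₂ : IsMolecule m₂) :
    aeNorm (m₁ + m₂) ≤ aeNorm m₁ + aeNorm m₂ := by
  have key : ∀ c₁ ∈ repSet m₁, ∀ c₂ ∈ repSet m₂, aeNorm (m₁ + m₂) ≤ c₁ + c₂ :=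
    fun c₁ hc₁ c₂ hc₂ => csInf_le (bddBelow_repSet _) (add_mem_repSet hc₁ hc₂)
  have h : aeNorm (m₁ + m₂) - aeNorm m₂ ≤ aeNorm m₁ := by
    refine le_csInf (repSet_nonempty h₁) fun c₁ hc₁ => ?_
    rw [sub_le_iff_le_add]
    calc aeNorm (m₁ + m₂) ≤ c₁ + sInf (repSet m₂) := by
          rw [← sub_le_iff_le_add']
          exact le_csInf (repSet_nonempty h₂) fun c₂ hc₂ => by
            rw [sub_le_iff_le_add']; exact key c₁ hc₁ c₂ hc₂
      _ = c₁ + aeNorm m₂ := rfl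
  linarith

lemma pair_le_aeNorm {g : X → ℝ} (hg : LipschitzWith 1 g) {m : X →₀ ℝ}
    (hm : IsMolecule m) : pair g m ≤ aeNorm m := by
  refine le_csInf (repSet_nonempty hm) ?_
  rintro c ⟨n, a, p, q, rfl, rfl⟩
  rw [map_sum]
  refine Finset.sum_le_sum fun i _ => ?_
  rw [map_smul, pair_mol, smul_eq_mul]
  have hd : |g (p i) - g (q i)| ≤ dist (p i) (q i) := by
    have := hg.dist_le_mul (p i) (q i)
    rwa [Real.dist_eq, NNReal.coe_one, one_mul] at this
  calc a i * (g (p i) - g (q i)) ≤ |a i * (g (p i) - g (q i))| := le_abs_self _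
    _ = |a i| * |g (p i) - g (q i)| := abs_mul _ _
    _ ≤ |a i| * dist (p i) (q i) := mul_le_mul_of_nonneg_left hd (abs_nonneg _)

/-- The submodule of molecules. -/
noncomputable def Mol (X : Type*) : Submodule ℝ (X →₀ ℝ) :=
  LinearMap.ker (pair (fun _ : X => (1 : ℝ)))

lemma mem_Mol_iff {m : X →₀ ℝ} : m ∈ Mol X ↔ IsMolecule m := by
  have h : pair (fun _ : X => (1 : ℝ)) m = m.sum (fun _ v => v) := by
    rw [pair_eq_sum]
    exact Finsupp.sum_congr fun x _ => one_mul _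
  rw [Mol, LinearMap.mem_ker, h, IsMolecule]

lemma mol_mem (p q : X) : mol p q ∈ Mol X := by
  rw [Mol, LinearMap.mem_ker, pair_mol, sub_self]

lemma exists_dual {m : X →₀ ℝ} (hm : IsMolecule m) (hne : m ≠ 0) :
    ∃ g : Mol X →ₗ[ℝ] ℝ, (∀ v : Mol X, g v ≤ aeNorm (v : X →₀ ℝ)) ∧
      g ⟨m, mem_Mol_iff.mpr hm⟩ = aeNorm m := by
  set m0 : Mol X := ⟨m, mem_Mol_iff.mpr hm⟩ with hm0def
  have hm0 : m0 ≠ 0 := fun h => hne (by simpa [hm0def, Subtype.ext_iff] using h)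
  obtain ⟨g, hg1, hg2⟩ := exists_extension_of_le_sublinear
    (LinearPMap.mkSpanSingleton m0 (aeNorm m) hm0)
    (fun v : Mol X => aeNorm (v : X →₀ ℝ))
    (fun c hc v => by
      show aeNorm ((c • v : Mol X) : X →₀ ℝ) = c * aeNorm (v : X →₀ ℝ)
      rw [Submodule.coe_smul]
      exact aeNorm_smul hc _)
    (fun v w => by
      show aeNorm ((v + w : Mol X) : X →₀ ℝ) ≤ _
      rw [Submodule.coe_add]
      exact aeNorm_add_le (mem_Mol_iff.mp v.2) (mem_Mol_iff.mp w.2))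
    (by
      rintro ⟨x, hx⟩
      obtain ⟨c, rfl⟩ := Submodule.mem_span_singleton.mp hx
      erw [LinearPMap.mkSpanSingleton'_apply]
      rcases le_or_gt c 0 with hc | hc
      · refine le_trans ?_ (aeNorm_nonneg _)
        rw [smul_eq_mul]
        exact mul_nonpos_of_nonpos_of_nonneg hc (aeNorm_nonneg m)
      · show c • aeNorm m ≤ aeNorm ((c • m0 : Mol X) : X →₀ ℝ)
        rw [Submodule.coe_smul, aeNorm_smul hc, smul_eq_mul])
  refine ⟨g, hg2, ?_⟩
  have h := hg1 ⟨m0, Submodule.mem_span_singleton_self m0⟩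
  rw [h]
  exact LinearPMap.mkSpanSingleton_apply ℝ ℝ hm0 (aeNorm m)

end AEProof

open AEProof in
/-- The Arens-Eells norm of a molecule `m` depends only on distances within a set containing
its support: for any `e ∈ X` and any finite `S ⊇ supp(m)`,
`‖m‖ = sup { Σ_x f(x) m(x) : f ∈ [Lip₀(S ∪ {e}, d, e)]₁ }`. -/
theorem aeNorm_eq_sup_on_support {X : Type*} [MetricSpace X] (e : X) (m : X →₀ ℝ)
    (hm : IsMolecule m) (S : Finset X) (hS : (m.support : Set X) ⊆ (S : Set X)) :
    aeNorm m = sSup { s : ℝ | ∃ f : X → ℝ,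
      LipschitzOnWith 1 f ((S : Set X) ∪ {e}) ∧ f e = 0 ∧
      s = m.sum (fun x v => f x * v) } := by
  classical
  set B := { s : ℝ | ∃ f : X → ℝ,
      LipschitzOnWith 1 f ((S : Set X) ∪ {e}) ∧ f e = 0 ∧
      s = m.sum (fun x v => f x * v) } with hB
  have hzlip : LipschitzOnWith 1 (fun _ : X => (0 : ℝ)) ((S : Set X) ∪ {e}) :=
    ((LipschitzWith.const (0 : ℝ)).weaken zero_le_one).lipschitzOnWith
  have hBne : B.Nonempty := ⟨m.sum (fun x v => (0 : ℝ) * v), fun _ => 0, hzlip, rfl, rfl⟩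
  have hBub : ∀ s ∈ B, s ≤ aeNorm m := by
    rintro s ⟨f, hf, hfe, rfl⟩
    obtain ⟨g, hgl, hEq⟩ := hf.extend_real
    have hsum : m.sum (fun x v => f x * v) = m.sum (fun x v => g x * v) :=
      Finset.sum_congr rfl fun x hx => by
        show f x * m x = g x * m x
        rw [hEq (Set.mem_union_left _ (hS hx))]
    rw [hsum, ← pair_eq_sum]
    exact pair_le_aeNorm hgl hm
  refine le_antisymm ?_ (csSup_le hBne hBub)
  refine le_csSup ⟨aeNorm m, hBub⟩ ?_
  rcases eq_or_ne m 0 with rfl | hne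
  · have h0 : aeNorm (0 : X →₀ ℝ) = 0 := by
      refine le_antisymm ?_ (aeNorm_nonneg _)
      refine csInf_le (bddBelow_repSet _) ?_
      exact ⟨0, Fin.elim0, Fin.elim0, Fin.elim0, by simp, by simp⟩
    rw [h0]
    exact ⟨fun _ => 0, hzlip, rfl, by simp⟩
  · obtain ⟨g, hg1, hg2⟩ := exists_dual hm hne
    set φ : X → ℝ := fun x => g ⟨mol x e, mol_mem x e⟩ with hφ
    have habs : ∀ x y : X, g ⟨mol x y, mol_mem x y⟩ ≤ dist x y := fun x y =>
      le_trans (hg1 _) (aeNorm_mol_le x y)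
    have hdiff : ∀ x y : X, φ x - φ y = g ⟨mol x y, mol_mem x y⟩ := by
      intro x y
      rw [hφ, ← map_sub]
      congr 1
      apply Subtype.ext
      show mol x e - mol y e = mol x y
      simp only [mol]
      abel
    have hφe : φ e = 0 := by
      have : (⟨mol e e, mol_mem e e⟩ : Mol X) = 0 := Subtype.ext (sub_self _)
      rw [hφ]
      show g ⟨mol e e, mol_mem e e⟩ = 0
      rw [this, map_zero]
    have hlip : LipschitzOnWith 1 φ ((S : Set X) ∪ {e}) := by
      rw [lipschitzOnWith_iff_dist_le_mul]
      intro x _ y _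
      rw [NNReal.coe_one, one_mul, Real.dist_eq, abs_sub_le_iff]
      constructor
      · rw [hdiff x y]; exact habs x y
      · rw [hdiff y x]; exact le_of_le_of_eq (habs y x) (dist_comm y x)
    have hrep : (⟨m, mem_Mol_iff.mpr hm⟩ : Mol X)
        = ∑ x ∈ m.support, m x • (⟨mol x e, mol_mem x e⟩ : Mol X) := by
      apply Subtype.ext
      push_cast
      exact molecule_rep e hm
    have hsum : m.sum (fun x v => φ x * v) = aeNorm m := by
      calc m.sum (fun x v => φ x * v) = ∑ x ∈ m.support, φ x * m x := rfl
        _ = ∑ x ∈ m.support, g (m x • (⟨mol x e, mol_mem x e⟩ : Mol X)) :=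
            Finset.sum_congr rfl fun x _ => by rw [map_smul, smul_eq_mul, mul_comm]
        _ = g (∑ x ∈ m.support, m x • (⟨mol x e, mol_mem x e⟩ : Mol X)) := (map_sum g _ _).symm
        _ = g ⟨m, mem_Mol_iff.mpr hm⟩ := by rw [← hrep]
        _ = aeNorm m := hg2
    exact ⟨φ, hlip, hφe, hsum.symm⟩
end

section
/- Suppose the Urysohn space U is isometrically embedded in a Banach space B with 0 ∈ U, and let X ⊆ U be a copy of U and X' ⊆ B' a copy of U in another Banach space B' with 0 ∈ X'. Then any isometry φ : X → X' with φ(0) = 0 extends to a linear isometry from the closed linear span of X in B onto the closed linear span of X' in B', assuming Holmes' formula: for all x_1,...,x_n ∈ U and scalars λ_i, ||Σ λ_i x_i|| = sup { |Σ λ_i f(x_i)| : f ∈ [Lip_0({x_1,...,x_n} ∪ {0})]_1 }. -/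
/-- Holmes' norm formula for a subset `U` of a Banach space containing `0`: for all points
`x₁,…,xₙ ∈ U` and scalars `λᵢ`,
`‖Σ λᵢ • xᵢ‖ = sup { |Σ λᵢ f(xᵢ)| : f ∈ [Lip₀({x₁,…,xₙ} ∪ {0})]₁ }`. -/
def HolmesFormula {B : Type*} [NormedAddCommGroup B] [NormedSpace ℝ B] (U : Set B) : Prop :=
  ∀ (n : ℕ) (x : Fin n → B), (∀ i, x i ∈ U) → ∀ lam : Fin n → ℝ,
    ‖∑ i, lam i • x i‖ = sSup { c : ℝ | ∃ f : B → ℝ, f 0 = 0 ∧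
      LipschitzOnWith 1 f (Set.range x ∪ {0}) ∧ c = |∑ i, lam i * f (x i)| }

lemma holmes_key {B B' : Type*} [NormedAddCommGroup B] [NormedSpace ℝ B]
    [NormedAddCommGroup B'] [NormedSpace ℝ B']
    (Xs : Set B) (Xs' : Set B') (h0 : (0 : B) ∈ Xs) (h0' : (0 : B') ∈ Xs')
    (hH : HolmesFormula Xs) (hH' : HolmesFormula Xs')
    (φ : B → B') (hbij : Set.BijOn φ Xs Xs') (hφ0 : φ 0 = 0)
    (hiso : ∀ x ∈ Xs, ∀ y ∈ Xs, dist (φ x) (φ y) = dist x y)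
    (n : ℕ) (x : Fin n → B) (hx : ∀ i, x i ∈ Xs) (lam : Fin n → ℝ) :
    ‖∑ i, lam i • x i‖ = ‖∑ i, lam i • φ (x i)‖ := by
  have : Nonempty B := ⟨0⟩
  have hsub : Set.range x ∪ {0} ⊆ Xs := by
    rintro a (⟨i, rfl⟩ | rfl)
    · exact hx i
    · exact h0
  have hrep : ∀ a ∈ Set.range (fun i => φ (x i)) ∪ {(0 : B')},
      ∃ u ∈ Set.range x ∪ {(0 : B)}, φ u = a := by
    rintro a (⟨i, rfl⟩ | rfl)
    · exact ⟨x i, Or.inl ⟨i, rfl⟩, rfl⟩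
    · exact ⟨0, Or.inr rfl, hφ0⟩
  have hinv : ∀ u ∈ Xs, Function.invFunOn φ Xs (φ u) = u := fun u hu =>
    hbij.injOn.leftInvOn_invFunOn hu
  rw [hH n x hx lam, hH' n (fun i => φ (x i)) (fun i => hbij.mapsTo (hx i)) lam]
  congr 1
  ext c
  constructor
  · rintro ⟨f, hf0, hfl, rfl⟩
    refine ⟨fun b' => f (Function.invFunOn φ Xs b'), ?_, ?_, ?_⟩
    · show f (Function.invFunOn φ Xs ((0 : B'))) = 0
      rw [← hφ0, hinv 0 h0, hf0]
    · rw [lipschitzOnWith_iff_dist_le_mul]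
      intro a ha b hb
      obtain ⟨u, hu, rfl⟩ := hrep a ha
      obtain ⟨w, hw, rfl⟩ := hrep b hb
      rw [hinv u (hsub hu), hinv w (hsub hw), hiso u (hsub hu) w (hsub hw)]
      simpa using (lipschitzOnWith_iff_dist_le_mul.mp hfl) u hu w hw
    · congr 1
      refine Finset.sum_congr rfl fun i _ => ?_
      show lam i * f (x i) = lam i * f (Function.invFunOn φ Xs (φ (x i)))
      rw [hinv (x i) (hx i)]
  · rintro ⟨g, hg0, hgl, rfl⟩
    refine ⟨fun b => g (φ b), by show g (φ 0) = 0; rw [hφ0, hg0], ?_, rfl⟩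
    rw [lipschitzOnWith_iff_dist_le_mul]
    intro a ha b hb
    have ha' : φ a ∈ Set.range (fun i => φ (x i)) ∪ {(0 : B')} := by
      rcases ha with ⟨i, rfl⟩ | rfl
      · exact Or.inl ⟨i, rfl⟩
      · exact Or.inr (by simp [hφ0])
    have hb' : φ b ∈ Set.range (fun i => φ (x i)) ∪ {(0 : B')} := by
      rcases hb with ⟨i, rfl⟩ | rfl
      · exact Or.inl ⟨i, rfl⟩
      · exact Or.inr (by simp [hφ0])
    have := (lipschitzOnWith_iff_dist_le_mul.mp hgl) (φ a) ha' (φ b) hb'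
    rw [hiso a (hsub ha) b (hsub hb)] at this
    simpa using this

/-- Suppose `X ⊆ B` and `X' ⊆ B'` are isometric copies of the Urysohn space in Banach spaces
`B`, `B'`, with `0 ∈ X`, `0 ∈ X'`, both satisfying Holmes' norm formula. Then any isometry
`φ : X → X'` with `φ(0) = 0` extends to a linear isometry from the closed linear span of `X`
in `B` onto the closed linear span of `X'` in `B'`. -/
theorem isometry_extends_to_closed_span {B B' : Type*}
    [NormedAddCommGroup B] [NormedSpace ℝ B] [CompleteSpace B]
    [NormedAddCommGroup B'] [NormedSpace ℝ B'] [CompleteSpace B']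
    (Xs : Set B) (Xs' : Set B') (h0 : (0 : B) ∈ Xs) (h0' : (0 : B') ∈ Xs')
    (hH : HolmesFormula Xs) (hH' : HolmesFormula Xs')
    (φ : B → B') (hbij : Set.BijOn φ Xs Xs') (hφ0 : φ 0 = 0)
    (hiso : ∀ x ∈ Xs, ∀ y ∈ Xs, dist (φ x) (φ y) = dist x y) :
    ∃ L : (Submodule.span ℝ Xs).topologicalClosure ≃ₗᵢ[ℝ]
          (Submodule.span ℝ Xs').topologicalClosure,
      ∀ (x : B) (hx : x ∈ Xs) (hx' : x ∈ (Submodule.span ℝ Xs).topologicalClosure),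
        (L ⟨x, hx'⟩ : B') = φ x := by
  classical
  set F : (Xs →₀ ℝ) →ₗ[ℝ] B := Finsupp.linearCombination ℝ (fun a : Xs => (a : B)) with hF
  set F' : (Xs →₀ ℝ) →ₗ[ℝ] B' := Finsupp.linearCombination ℝ (fun a : Xs => φ (a : B)) with hF'
  have normeq : ∀ v : (Xs →₀ ℝ), ‖F v‖ = ‖F' v‖ := by
    intro v
    set s := v.support with hs
    set e : Fin s.card ≃ s := s.equivFin.symm with he
    have key := holmes_key Xs Xs' h0 h0' hH hH' φ hbij hφ0 hiso s.card
      (fun i => ((e i : Xs) : B)) (fun i => (e i : Xs).2) (fun i => v (e i))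
    have h1 : F v = ∑ i, v (e i) • ((e i : Xs) : B) := by
      rw [hF, Finsupp.linearCombination_apply, Finsupp.sum,
        ← Finset.sum_coe_sort s (fun a => v a • ((a : Xs) : B))]
      exact (Equiv.sum_comp e (fun a : s => v (a : Xs) • ((a : Xs) : B))).symm
    have h2 : F' v = ∑ i, v (e i) • φ ((e i : Xs) : B) := by
      rw [hF', Finsupp.linearCombination_apply, Finsupp.sum,
        ← Finset.sum_coe_sort s (fun a => v a • φ ((a : Xs) : B))]
      exact (Equiv.sum_comp e (fun a : s => v (a : Xs) • φ ((a : Xs) : B))).symm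
    rw [h1, h2]
    exact key
  have hker : LinearMap.ker F ≤ LinearMap.ker F' := by
    intro v hv
    rw [LinearMap.mem_ker] at hv ⊢
    have := normeq v
    rw [hv, norm_zero] at this
    exact norm_eq_zero.mp this.symm
  have hrange : LinearMap.range F = Submodule.span ℝ Xs := by
    rw [hF, Finsupp.range_linearCombination, Subtype.range_coe]
  have hrange' : LinearMap.range F' = Submodule.span ℝ Xs' := by
    rw [hF', Finsupp.range_linearCombination]
    congr 1
    have : Set.range (fun a : Xs => φ (a : B)) = φ '' Xs := by
      ext b'
      constructor
      · rintro ⟨a, rfl⟩; exact ⟨a, a.2, rfl⟩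
      · rintro ⟨a, ha, rfl⟩; exact ⟨⟨a, ha⟩, rfl⟩
    rw [this, hbij.image_eq]
  set ψ : ((Xs →₀ ℝ) ⧸ LinearMap.ker F) →ₗ[ℝ] B' := (LinearMap.ker F).liftQ F' hker with hψ
  set equot := F.quotKerEquivRange with hequot
  set ι : (Submodule.span ℝ Xs : Submodule ℝ B) ≃ₗ[ℝ] LinearMap.range F :=
    LinearEquiv.ofEq _ _ hrange.symm with hι
  set T : (Submodule.span ℝ Xs : Submodule ℝ B) →ₗ[ℝ] B' :=
    ψ ∘ₗ (equot.symm.toLinearMap ∘ₗ ι.toLinearMap) with hT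
  have hTeval : ∀ (v : Xs →₀ ℝ) (h : F v ∈ Submodule.span ℝ Xs), T ⟨F v, h⟩ = F' v := by
    intro v h
    have h1 : ι ⟨F v, h⟩ = ⟨F v, LinearMap.mem_range_self F v⟩ := rfl
    have h2 : equot.symm ⟨F v, LinearMap.mem_range_self F v⟩ = Submodule.Quotient.mk v := by
      rw [LinearEquiv.symm_apply_eq]
      exact Subtype.ext (F.quotKerEquivRange_apply_mk v)
    simp only [hT, LinearMap.comp_apply, LinearEquiv.coe_coe, h1, h2, hψ,
      Submodule.liftQ_apply]
  have hTnorm : ∀ p : (Submodule.span ℝ Xs : Submodule ℝ B), ‖T p‖ = ‖p‖ := by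
    rintro ⟨p, hp⟩
    obtain ⟨v, rfl⟩ : ∃ v, F v = p := by rw [← hrange] at hp; exact hp
    rw [hTeval v hp, ← normeq v]
    rfl
  have hTmem : ∀ p : (Submodule.span ℝ Xs : Submodule ℝ B), T p ∈ Submodule.span ℝ Xs' := by
    rintro ⟨p, hp⟩
    obtain ⟨v, rfl⟩ : ∃ v, F v = p := by rw [← hrange] at hp; exact hp
    rw [hTeval v hp]
    exact hrange' ▸ LinearMap.mem_range_self F' v
  set li : (Submodule.span ℝ Xs : Submodule ℝ B) →ₗᵢ[ℝ] B' := ⟨T, hTnorm⟩ with hli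
  set einc : (Submodule.span ℝ Xs : Submodule ℝ B) →ₗᵢ[ℝ]
      (Submodule.span ℝ Xs).topologicalClosure :=
    ⟨Submodule.inclusion (Submodule.le_topologicalClosure _), fun p => rfl⟩ with heinc
  have hrangeeinc : Subtype.val '' Set.range einc.toContinuousLinearMap
      = (Submodule.span ℝ Xs : Set B) := by
    ext b
    constructor
    · rintro ⟨d, ⟨p, rfl⟩, rfl⟩
      exact p.2
    · intro hb
      exact ⟨einc.toContinuousLinearMap ⟨b, hb⟩, ⟨⟨b, hb⟩, rfl⟩, rfl⟩
  have h_dense : DenseRange einc.toContinuousLinearMap := by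
    intro d
    rw [closure_subtype, hrangeeinc]
    exact d.2
  have h_ui : IsUniformInducing einc.toContinuousLinearMap :=
    einc.isometry.isUniformInducing
  set G := ContinuousLinearMap.extend li.toContinuousLinearMap einc.toContinuousLinearMap
    with hG
  have hGe : ∀ p, G (einc.toContinuousLinearMap p) = li p :=
    fun p => ContinuousLinearMap.extend_eq (f := li.toContinuousLinearMap)
      (e := einc.toContinuousLinearMap) h_dense h_ui p
  have hGnorm : ∀ d : (Submodule.span ℝ Xs).topologicalClosure, ‖G d‖ = ‖d‖ := by
    have hcl : IsClosed {d : (Submodule.span ℝ Xs).topologicalClosure | ‖G d‖ = ‖d‖} :=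
      isClosed_eq G.continuous.norm continuous_subtype_val.norm
    intro d
    refine h_dense.induction_on d hcl fun p => ?_
    show ‖G (einc.toContinuousLinearMap p)‖ = ‖einc.toContinuousLinearMap p‖
    rw [hGe p]
    exact (li.norm_map p).trans (einc.norm_map p).symm
  have hGmem : ∀ d : (Submodule.span ℝ Xs).topologicalClosure,
      G d ∈ (Submodule.span ℝ Xs').topologicalClosure := by
    have hcl : IsClosed {d : (Submodule.span ℝ Xs).topologicalClosure |
        G d ∈ (Submodule.span ℝ Xs').topologicalClosure} :=
      (Submodule.isClosed_topologicalClosure _).preimage G.continuous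
    intro d
    refine h_dense.induction_on d hcl fun p => ?_
    show G (einc.toContinuousLinearMap p) ∈ (Submodule.span ℝ Xs').topologicalClosure
    rw [hGe p]
    exact Submodule.le_topologicalClosure _ (hTmem p)
  set Gli : (Submodule.span ℝ Xs).topologicalClosure →ₗᵢ[ℝ]
      (Submodule.span ℝ Xs').topologicalClosure :=
    ⟨LinearMap.codRestrict _ (G : _ →ₗ[ℝ] B') hGmem, fun d => by
      rw [← hGnorm d]; rfl⟩ with hGli
  have hGlival : ∀ d, (Gli d : B') = G d := fun d => rfl
  have hclosed : IsClosed (Set.range Gli) :=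
    Gli.isometry.isClosedEmbedding.isClosed_range
  have hsub2 : ∀ z : (Submodule.span ℝ Xs').topologicalClosure,
      (z : B') ∈ Submodule.span ℝ Xs' → z ∈ Set.range Gli := by
    intro z hz
    have hz2 : (z : B') ∈ LinearMap.range F' := by rw [hrange']; exact hz
    obtain ⟨v, hv⟩ := hz2
    have hFv : F v ∈ Submodule.span ℝ Xs := hrange ▸ LinearMap.mem_range_self F v
    refine ⟨einc.toContinuousLinearMap ⟨F v, hFv⟩, ?_⟩
    apply Subtype.ext
    rw [hGlival, hGe]
    show T ⟨F v, hFv⟩ = (z : B')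
    rw [hTeval v hFv, hv]
  have hsurj : Function.Surjective Gli := by
    intro y
    have himg : (Submodule.span ℝ Xs' : Set B') ⊆ Subtype.val '' Set.range Gli := fun z hz =>
      ⟨⟨z, Submodule.le_topologicalClosure _ hz⟩, hsub2 _ hz, rfl⟩
    have hy : y ∈ closure (Set.range Gli) := by
      rw [closure_subtype]
      exact closure_mono himg y.2
    rwa [hclosed.closure_eq] at hy
  refine ⟨LinearIsometryEquiv.ofSurjective Gli hsurj, ?_⟩
  intro x hx hx'
  rw [LinearIsometryEquiv.coe_ofSurjective]
  have hxspan : x ∈ Submodule.span ℝ Xs := Submodule.subset_span hx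
  have hpt : (⟨x, hx'⟩ : (Submodule.span ℝ Xs).topologicalClosure)
      = einc.toContinuousLinearMap ⟨x, hxspan⟩ := rfl
  rw [hpt, hGlival, hGe]
  show T ⟨x, hxspan⟩ = φ x
  set v : Xs →₀ ℝ := Finsupp.single (⟨x, hx⟩ : Xs) 1 with hv
  have hFv : F v = x := by
    rw [hF, hv, Finsupp.linearCombination_single, one_smul]
  have hpt2 : (⟨x, hxspan⟩ : (Submodule.span ℝ Xs : Submodule ℝ B))
      = ⟨F v, hFv ▸ hxspan⟩ := Subtype.ext hFv.symm
  rw [hpt2, hTeval]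
  rw [hF', hv, Finsupp.linearCombination_single, one_smul]
end

section
/- Assuming Holmes' norm formula for isometric copies of U containing 0 in a Banach space, if U ⊆ B with 0 ∈ U and P ⊆ U is a Polish metric space containing 0, then the closed linear span of P in B is linearly isometric to the Lipschitz-free space F(P). -/
section Aux

variable {X : Type*} [MetricSpace X]

/-- The set of costs of representations of a molecule. -/
def repSet (m : X →₀ ℝ) : Set ℝ :=
  { c | ∃ (n : ℕ) (a : Fin n → ℝ) (p q : Fin n → X),
    m = ∑ i, a i • mol (p i) (q i) ∧ c = ∑ i, |a i| * dist (p i) (q i) }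

lemma aeNorm_def (m : X →₀ ℝ) : aeNorm m = sInf (repSet m) := rfl

lemma repSet_nonneg (m : X →₀ ℝ) : ∀ c ∈ repSet m, 0 ≤ c := by
  rintro c ⟨n, a, p, q, -, rfl⟩
  exact Finset.sum_nonneg fun i _ => mul_nonneg (abs_nonneg _) dist_nonneg

lemma repSet_bddBelow (m : X →₀ ℝ) : BddBelow (repSet m) :=
  ⟨0, fun c hc => repSet_nonneg m c hc⟩

lemma aeNorm_nonneg (m : X →₀ ℝ) : 0 ≤ aeNorm m :=
  Real.sInf_nonneg (repSet_nonneg m)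

lemma mol_self (x : X) : mol x x = 0 := sub_self _

lemma mol_sub (x y z : X) : mol x z - mol y z = mol x y := by
  simp only [mol]; abel

lemma mol_neg (x y : X) : -(mol x y) = mol y x := by
  simp only [mol]; abel

lemma zero_mem_repSet_zero : (0 : ℝ) ∈ repSet (0 : X →₀ ℝ) :=
  ⟨0, Fin.elim0, Fin.elim0, Fin.elim0, by simp, by simp⟩

lemma aeNorm_zero : aeNorm (0 : X →₀ ℝ) = 0 :=
  le_antisymm (csInf_le (repSet_bddBelow _) zero_mem_repSet_zero) (aeNorm_nonneg _)

lemma aeNorm_mol_le (x y : X) : aeNorm (mol x y) ≤ dist x y := by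
  refine csInf_le (repSet_bddBelow _)
    ⟨1, fun _ => 1, fun _ => x, fun _ => y, by simp, by simp⟩

lemma repSet_add {m₁ m₂ : X →₀ ℝ} {c₁ c₂ : ℝ} (h₁ : c₁ ∈ repSet m₁) (h₂ : c₂ ∈ repSet m₂) :
    c₁ + c₂ ∈ repSet (m₁ + m₂) := by
  obtain ⟨n₁, a₁, p₁, q₁, hm₁, hc₁⟩ := h₁
  obtain ⟨n₂, a₂, p₂, q₂, hm₂, hc₂⟩ := h₂
  refine ⟨n₁ + n₂, Fin.addCases a₁ a₂, Fin.addCases p₁ p₂, Fin.addCases q₁ q₂, ?_, ?_⟩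
  · rw [Fin.sum_univ_add, hm₁, hm₂]
    simp
  · rw [Fin.sum_univ_add, hc₁, hc₂]
    simp

lemma repSet_smul (c : ℝ) {m : X →₀ ℝ} {t : ℝ} (h : t ∈ repSet m) :
    |c| * t ∈ repSet (c • m) := by
  obtain ⟨n, a, p, q, hm, hc⟩ := h
  refine ⟨n, fun i => c * a i, p, q, ?_, ?_⟩
  · rw [hm, Finset.smul_sum]
    simp [smul_smul]
  · rw [hc, Finset.mul_sum]
    simp [abs_mul, mul_assoc]

lemma aeNorm_smul_le (c : ℝ) (m : X →₀ ℝ) (h : (repSet m).Nonempty) :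
    aeNorm (c • m) ≤ |c| * aeNorm m := by
  rcases eq_or_ne c 0 with rfl | hc
  · simp [aeNorm_zero]
  · have hc' : 0 < |c| := abs_pos.2 hc
    rw [aeNorm_def, aeNorm_def, ← div_le_iff₀' hc']
    refine le_csInf h fun t ht => ?_
    rw [div_le_iff₀' hc']
    exact csInf_le (repSet_bddBelow _) (repSet_smul c ht)

lemma aeNorm_smul_eq (c : ℝ) (hc : c ≠ 0) (m : X →₀ ℝ) (h : (repSet m).Nonempty) :
    aeNorm (c • m) = |c| * aeNorm m := by
  refine le_antisymm (aeNorm_smul_le c m h) ?_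
  obtain ⟨t, ht⟩ := h
  have h2 := aeNorm_smul_le c⁻¹ (c • m) ⟨|c| * t, repSet_smul c ht⟩
  rw [smul_smul, inv_mul_cancel₀ hc, one_smul] at h2
  have h3 : |c| * aeNorm m ≤ |c| * (|c⁻¹| * aeNorm (c • m)) :=
    mul_le_mul_of_nonneg_left h2 (abs_nonneg c)
  calc |c| * aeNorm m ≤ |c| * (|c⁻¹| * aeNorm (c • m)) := h3
    _ = aeNorm (c • m) := by
        rw [← mul_assoc, ← abs_mul, mul_inv_cancel₀ hc, abs_one, one_mul]

lemma aeNorm_add_le (m₁ m₂ : X →₀ ℝ) (h₁ : (repSet m₁).Nonempty) (h₂ : (repSet m₂).Nonempty) :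
    aeNorm (m₁ + m₂) ≤ aeNorm m₁ + aeNorm m₂ := by
  have key : ∀ c₁ ∈ repSet m₁, ∀ c₂ ∈ repSet m₂, aeNorm (m₁ + m₂) ≤ c₁ + c₂ :=
    fun c₁ hc₁ c₂ hc₂ => csInf_le (repSet_bddBelow _) (repSet_add hc₁ hc₂)
  have step : ∀ c₂ ∈ repSet m₂, aeNorm (m₁ + m₂) - c₂ ≤ aeNorm m₁ := by
    intro c₂ hc₂
    rw [aeNorm_def m₁]
    exact le_csInf h₁ fun c₁ hc₁ => by linarith [key c₁ hc₁ c₂ hc₂]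
  have last : aeNorm (m₁ + m₂) - aeNorm m₁ ≤ aeNorm m₂ := by
    rw [aeNorm_def m₂]
    exact le_csInf h₂ fun c₂ hc₂ => by linarith [step c₂ hc₂]
  linarith

lemma repSet_nonempty_of_sum (b : X) (m : X →₀ ℝ)
    (hm : (∑ x ∈ m.support, m x) = 0) : (repSet m).Nonempty := by
  classical
  set e : Fin m.support.card ≃ {x // x ∈ m.support} := m.support.equivFin.symm with he
  refine ⟨∑ i, |m ((e i : X))| * dist ((e i : X)) b,
    m.support.card, fun i => m ((e i : X)), fun i => (e i : X), fun _ => b, ?_, rfl⟩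
  have h1 : ∑ i, m ((e i : X)) • mol ((e i : X)) b
      = ∑ x : {x // x ∈ m.support}, m (x : X) • mol ((x : X)) b :=
    Equiv.sum_comp e (fun x : {x // x ∈ m.support} => m (x : X) • mol ((x : X)) b)
  rw [h1, Finset.sum_coe_sort m.support (fun x => m x • mol x b)]
  have h2 : ∑ x ∈ m.support, m x • mol x b
      = (∑ x ∈ m.support, Finsupp.single x (m x))
        - (∑ x ∈ m.support, m x) • Finsupp.single b 1 := by
    rw [Finset.sum_smul, ← Finset.sum_sub_distrib]
    refine Finset.sum_congr rfl fun x _ => ?_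
    simp [mol, smul_sub, Finsupp.smul_single']
  rw [h2, hm, zero_smul, sub_zero]
  conv_lhs => rw [← Finsupp.sum_single m]
  rfl

end Aux

/-- Assuming Holmes' norm formula for a copy `U ⊆ B` of the Urysohn space with `0 ∈ U`, if
`P ⊆ U` is a Polish metric space containing `0`, then the closed linear span of `P` in `B`
is linearly isometric to the Lipschitz-free space `F(P)` (with basepoint `0`): the norm of
every finite linear combination of points of `P` in `B` equals the Arens-Eells norm of the
corresponding molecule, so the correspondence extends to a linear isometry between the
completions. -/
theorem closed_span_isometric_to_free_space {B : Type*}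
    [NormedAddCommGroup B] [NormedSpace ℝ B] [CompleteSpace B]
    (Uset : Set B) (h0U : (0 : B) ∈ Uset) (hH : HolmesFormula Uset)
    (Pset : Set B) (hPU : Pset ⊆ Uset) (h0P : (0 : B) ∈ Pset)
    (hPolish : IsClosed Pset ∧ TopologicalSpace.SeparableSpace Pset) :
    ∀ (n : ℕ) (lam : Fin n → ℝ) (p : Fin n → B) (hp : ∀ i, p i ∈ Pset),
      ‖∑ i, lam i • p i‖ =
        aeNorm (∑ i, lam i • mol (⟨p i, hp i⟩ : Pset) (⟨0, h0P⟩ : Pset)) := by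
  classical
  intro n lam p hp
  set b : Pset := ⟨0, h0P⟩ with hb
  set xi : Fin n → Pset := fun i => ⟨p i, hp i⟩ with hxi
  set M : ↥Pset →₀ ℝ := ∑ i, lam i • mol (xi i) b with hMdef
  show ‖∑ i, lam i • p i‖ = aeNorm M
  -- the evaluation map
  set T : (↥Pset →₀ ℝ) →ₗ[ℝ] B := Finsupp.linearCombination ℝ (fun x : Pset => (x : B))
    with hT
  have hTmol : ∀ x y : Pset, T (mol x y) = (x : B) - (y : B) := by
    intro x y
    simp [hT, mol, map_sub]
  have hTM : T M = ∑ i, lam i • p i := by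
    rw [hMdef, map_sum]
    refine Finset.sum_congr rfl fun i _ => ?_
    rw [map_smul, hTmol]
    simp [xi, b]
  -- easy direction
  have easy : ‖∑ i, lam i • p i‖ ≤ aeNorm M := by
    rw [aeNorm_def]
    refine le_csInf ⟨∑ i, |lam i| * dist (xi i) b, n, lam, xi, fun _ => b, hMdef, rfl⟩ ?_
    rintro c ⟨k, a, u, v, hmu, rfl⟩
    rw [← hTM]
    calc ‖T M‖ = ‖∑ j, a j • ((u j : B) - (v j : B))‖ := by
          rw [hmu, map_sum]
          congr 1
          refine Finset.sum_congr rfl fun j _ => ?_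
          rw [map_smul, hTmol]
      _ ≤ ∑ j, ‖a j • ((u j : B) - (v j : B))‖ := norm_sum_le _ _
      _ = ∑ j, |a j| * dist (u j) (v j) := by
          refine Finset.sum_congr rfl fun j _ => ?_
          rw [norm_smul, Real.norm_eq_abs, Subtype.dist_eq, dist_eq_norm]
  refine le_antisymm easy ?_
  by_cases hM0 : M = 0
  · rw [hM0, aeNorm_zero]
    exact norm_nonneg _
  -- hard direction
  set S : (↥Pset →₀ ℝ) →ₗ[ℝ] ℝ := Finsupp.linearCombination ℝ (fun _ : Pset => (1 : ℝ))
    with hS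
  have hmolS : ∀ x y : Pset, mol x y ∈ LinearMap.ker S := by
    intro x y
    simp [LinearMap.mem_ker, hS, mol, map_sub]
  set K := LinearMap.ker S with hK
  have hne : ∀ e : K, (repSet (e : ↥Pset →₀ ℝ)).Nonempty := by
    intro e
    refine repSet_nonempty_of_sum b _ ?_
    have he : S (e : ↥Pset →₀ ℝ) = 0 := LinearMap.mem_ker.1 e.2
    rw [hS, Finsupp.linearCombination_apply, Finsupp.sum] at he
    simpa using he
  have hMK : M ∈ K := by
    rw [hMdef]
    exact Submodule.sum_mem _ fun i _ => Submodule.smul_mem _ _ (hmolS _ _)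
  set MK : K := ⟨M, hMK⟩ with hMKdef
  have hMK0 : MK ≠ 0 := fun h => hM0 (congrArg Subtype.val h)
  set N : K → ℝ := fun e => aeNorm (e : ↥Pset →₀ ℝ) with hN
  have N_hom : ∀ c : ℝ, 0 < c → ∀ e : K, N (c • e) = c * N e := by
    intro c hc e
    show aeNorm ((c • e : K) : ↥Pset →₀ ℝ) = c * aeNorm (e : ↥Pset →₀ ℝ)
    rw [Submodule.coe_smul, aeNorm_smul_eq c hc.ne' _ (hne e), abs_of_pos hc]
  have N_add : ∀ e₁ e₂ : K, N (e₁ + e₂) ≤ N e₁ + N e₂ := by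
    intro e₁ e₂
    show aeNorm (((e₁ + e₂ : K)) : ↥Pset →₀ ℝ) ≤ aeNorm (e₁ : ↥Pset →₀ ℝ) + aeNorm (e₂ : ↥Pset →₀ ℝ)
    rw [Submodule.coe_add]
    exact aeNorm_add_le _ _ (hne e₁) (hne e₂)
  -- the partial functional on the span of MK
  set f : K →ₗ.[ℝ] ℝ := LinearPMap.mkSpanSingleton MK (aeNorm M) hMK0 with hf
  have hdom : f.domain = (ℝ ∙ MK) := LinearPMap.domain_mkSpanSingleton _ _ _
  have hfle : ∀ z : f.domain, f z ≤ N z := by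
    intro z
    obtain ⟨c, hc⟩ := Submodule.mem_span_singleton.1 (hdom.le z.2)
    have hmem : c • MK ∈ f.domain :=
      hdom.ge (Submodule.smul_mem _ _ (Submodule.mem_span_singleton_self _))
    have hz : z = ⟨c • MK, hmem⟩ := Subtype.ext hc.symm
    rw [hz]
    have happ : f ⟨c • MK, hmem⟩ = c • aeNorm M :=
      LinearPMap.mkSpanSingleton'_apply _ _ _ c _
    rw [happ]
    show c • aeNorm M ≤ N (c • MK)
    rcases lt_trichotomy c 0 with h | h | h
    · have h1 : 0 ≤ N (c • MK) := aeNorm_nonneg _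
      have h2 : 0 ≤ aeNorm M := aeNorm_nonneg M
      have h3 : c • aeNorm M ≤ 0 := by
        rw [smul_eq_mul]
        exact mul_nonpos_of_nonpos_of_nonneg h.le h2
      linarith
    · subst h
      simp only [zero_smul]
      have h0 : N (0 : K) = 0 := by
        show aeNorm ((0 : K) : ↥Pset →₀ ℝ) = 0
        rw [ZeroMemClass.coe_zero, aeNorm_zero]
      rw [h0]
    · rw [N_hom c h, smul_eq_mul]
  obtain ⟨g, hg1, hg2⟩ := exists_extension_of_le_sublinear f N N_hom N_add hfle
  have hMKmem : MK ∈ f.domain := hdom.ge (Submodule.mem_span_singleton_self _)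
  have hgM : g MK = aeNorm M := by
    have h1 := hg1 ⟨MK, hMKmem⟩
    have h2 : f ⟨MK, hMKmem⟩ = aeNorm M :=
      LinearPMap.mkSpanSingleton'_apply_self _ _ _ _
    calc g MK = g ((⟨MK, hMKmem⟩ : f.domain) : K) := rfl
      _ = f ⟨MK, hMKmem⟩ := h1
      _ = aeNorm M := h2
  have hgLip : ∀ x y : Pset, g ⟨mol x y, hmolS x y⟩ ≤ dist x y := by
    intro x y
    exact (hg2 _).trans (aeNorm_mol_le x y)
  -- build the Lipschitz function
  set F : B → ℝ := fun v => if h : v ∈ Pset then g ⟨mol ⟨v, h⟩ b, hmolS _ _⟩ else 0 with hF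
  have hFP : ∀ (v : B) (h : v ∈ Pset), F v = g ⟨mol ⟨v, h⟩ b, hmolS _ _⟩ := by
    intro v h
    simp only [hF, dif_pos h]
  have hF0 : F 0 = 0 := by
    rw [hFP 0 h0P]
    have h1 : (⟨mol ⟨0, h0P⟩ b, hmolS _ _⟩ : K) = 0 := by
      apply Subtype.ext
      show mol (⟨0, h0P⟩ : Pset) b = ((0 : K) : ↥Pset →₀ ℝ)
      rw [ZeroMemClass.coe_zero]
      exact mol_self b
    rw [h1, map_zero]
  have hgabs : ∀ x y : Pset, |g ⟨mol x y, hmolS x y⟩| ≤ dist x y := by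
    intro x y
    have hpos := hgLip x y
    have hneg : -g ⟨mol x y, hmolS x y⟩ ≤ dist x y := by
      have h1 : (⟨mol y x, hmolS y x⟩ : K) = -(⟨mol x y, hmolS x y⟩ : K) := by
        apply Subtype.ext
        show mol y x = -(mol x y)
        exact (mol_neg x y).symm
      have h3 : g ⟨mol y x, hmolS y x⟩ = -g ⟨mol x y, hmolS x y⟩ := by
        rw [h1]
        exact map_neg g (⟨mol x y, hmolS x y⟩ : K)
      have h2 := hgLip y x
      rw [h3, dist_comm] at h2
      exact h2
    rw [abs_le]
    exact ⟨by linarith, hpos⟩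
  have hFLip : LipschitzOnWith 1 F (Set.range p ∪ {0}) := by
    apply LipschitzOnWith.of_dist_le_mul
    intro v hv w hw
    have hvP : v ∈ Pset := by
      rcases hv with ⟨i, rfl⟩ | hv
      · exact hp i
      · rw [Set.mem_singleton_iff] at hv; subst hv; exact h0P
    have hwP : w ∈ Pset := by
      rcases hw with ⟨i, rfl⟩ | hw
      · exact hp i
      · rw [Set.mem_singleton_iff] at hw; subst hw; exact h0P
    rw [hFP v hvP, hFP w hwP, Real.dist_eq]
    have hsub : (⟨mol ⟨v, hvP⟩ b, hmolS _ _⟩ : K) - ⟨mol ⟨w, hwP⟩ b, hmolS _ _⟩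
        = ⟨mol ⟨v, hvP⟩ ⟨w, hwP⟩, hmolS _ _⟩ := by
      apply Subtype.ext
      show mol ⟨v, hvP⟩ b - mol ⟨w, hwP⟩ b = mol ⟨v, hvP⟩ ⟨w, hwP⟩
      exact mol_sub _ _ _
    have : g ⟨mol ⟨v, hvP⟩ b, hmolS _ _⟩ - g ⟨mol ⟨w, hwP⟩ b, hmolS _ _⟩
        = g ⟨mol ⟨v, hvP⟩ ⟨w, hwP⟩, hmolS _ _⟩ := by
      rw [← map_sub, hsub]
    rw [this]
    have := hgabs ⟨v, hvP⟩ ⟨w, hwP⟩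
    rw [Subtype.dist_eq] at this
    simpa using this
  -- plug into Holmes' formula
  have hx : ∀ i, p i ∈ Uset := fun i => hPU (hp i)
  have holmes := hH n p hx lam
  rw [holmes]
  have hsum : ∑ i, lam i * F (p i) = aeNorm M := by
    have hFi : ∀ i, F (p i) = g ⟨mol (xi i) b, hmolS _ _⟩ := fun i => hFP (p i) (hp i)
    have h1 : ∑ i, lam i * F (p i) = g (∑ i, lam i • (⟨mol (xi i) b, hmolS _ _⟩ : K)) := by
      rw [map_sum]
      refine Finset.sum_congr rfl fun i _ => ?_
      rw [hFi i, map_smul, smul_eq_mul]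
    have h2 : (∑ i, lam i • (⟨mol (xi i) b, hmolS _ _⟩ : K)) = MK := by
      apply Subtype.ext
      show ((∑ i, lam i • (⟨mol (xi i) b, hmolS _ _⟩ : K) : K) : ↥Pset →₀ ℝ) = M
      rw [AddSubmonoidClass.coe_finset_sum, hMdef]
      rfl
    rw [h1, h2, hgM]
  have hmem : aeNorm M ∈ { c : ℝ | ∃ f : B → ℝ, f 0 = 0 ∧
      LipschitzOnWith 1 f (Set.range p ∪ {0}) ∧ c = |∑ i, lam i * f (p i)| } := by
    refine ⟨F, hF0, hFLip, ?_⟩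
    rw [hsum, abs_of_nonneg (aeNorm_nonneg M)]
  have hbdd : BddAbove { c : ℝ | ∃ f : B → ℝ, f 0 = 0 ∧
      LipschitzOnWith 1 f (Set.range p ∪ {0}) ∧ c = |∑ i, lam i * f (p i)| } := by
    refine ⟨∑ i, |lam i| * ‖p i‖, ?_⟩
    rintro c ⟨f', hf'0, hf'lip, rfl⟩
    calc |∑ i, lam i * f' (p i)| ≤ ∑ i, |lam i * f' (p i)| :=
          Finset.abs_sum_le_sum_abs _ _
      _ ≤ ∑ i, |lam i| * ‖p i‖ := by
          refine Finset.sum_le_sum fun i _ => ?_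
          rw [abs_mul]
          refine mul_le_mul_of_nonneg_left ?_ (abs_nonneg _)
          have := hf'lip.dist_le_mul (p i) (Or.inl ⟨i, rfl⟩) 0 (Or.inr rfl)
          rw [hf'0, Real.dist_eq, sub_zero] at this
          simpa [dist_eq_norm] using this
  exact le_csSup hbdd hmem
end
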